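/- For every real t ≥ 1 and every real s ≥ 0, Γ(t)/Γ(t+s) ≤ 2 · √(1 + s/t) · (t/(t+s))^t · e^s · (t+s)^{−s}, where Γ is the Euler Gamma function. -/

import Mathlib

open Real Set

/-- derivative helper for the midpoint inequality -/
lemma mid_hasDeriv (z : ℝ) (hz0 : 0 < z) (hz1 : z < 1) :
    HasDerivAt (fun u : ℝ => 2*u - (1+u) * Real.log (1+u) + (1-u) * Real.log (1-u))
      (- Real.log (1+z) - Real.log (1-z)) z := by
  have h1 : HasDerivAt (fun u : ℝ => 1 + u) 1 z := (hasDerivAt_id z).const_add 1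
  have h2 : HasDerivAt (fun u : ℝ => 1 - u) (-1) z := by
    exact (hasDerivAt_id z).const_sub 1
  have hl1 : HasDerivAt (fun u : ℝ => Real.log (1+u)) (1/(1+z)) z := by
    have := (Real.hasDerivAt_log (by linarith : (1:ℝ)+z ≠ 0)).comp z h1
    simpa [one_div, Function.comp_def] using this
  have hl2 : HasDerivAt (fun u : ℝ => Real.log (1-u)) (-(1/(1-z))) z := by
    have := (Real.hasDerivAt_log (by linarith : (1:ℝ)-z ≠ 0)).comp z h2
    simpa [one_div, Function.comp_def] using this
  have hm1 : HasDerivAt (fun u : ℝ => (1+u) * Real.log (1+u))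
      (Real.log (1+z) + 1) z := by
    have := h1.mul hl1
    refine this.congr_deriv ?_
    have hne : (1:ℝ) + z ≠ 0 := by linarith
    field_simp
  have hm2 : HasDerivAt (fun u : ℝ => (1-u) * Real.log (1-u))
      (- Real.log (1-z) - 1) z := by
    have := h2.mul hl2
    refine this.congr_deriv ?_
    have hne : (1:ℝ) - z ≠ 0 := by linarith
    field_simp
    ring
  have hlin : HasDerivAt (fun u : ℝ => 2*u) 2 z := by
    simpa using (hasDerivAt_id z).const_mul 2
  have := (hlin.sub hm1).add hm2
  refine this.congr_deriv ?_
  ring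

lemma mid_core {u : ℝ} (h0 : 0 ≤ u) (h1 : u < 1) :
    (1+u) * Real.log (1+u) - (1-u) * Real.log (1-u) ≤ 2*u := by
  have key : MonotoneOn (fun u : ℝ => 2*u - (1+u) * Real.log (1+u) + (1-u) * Real.log (1-u))
      (Set.Ico 0 1) := by
    apply monotoneOn_of_deriv_nonneg (convex_Ico 0 1)
    · apply ContinuousOn.add
      · apply ContinuousOn.sub (by fun_prop)
        apply ContinuousOn.mul (by fun_prop)
        apply Real.continuousOn_log.comp (by fun_prop)
        intro z hz
        simp only [Set.mem_Ico] at hz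
        simp only [Set.mem_compl_iff, Set.mem_singleton_iff]
        intro h; linarith [hz.1]
      · apply ContinuousOn.mul (by fun_prop)
        apply Real.continuousOn_log.comp (by fun_prop)
        intro z hz
        simp only [Set.mem_Ico] at hz
        simp only [Set.mem_compl_iff, Set.mem_singleton_iff]
        intro h; linarith [hz.2]
    · rw [interior_Ico]
      intro z hz
      exact (mid_hasDeriv z hz.1 hz.2).differentiableAt.differentiableWithinAt
    · rw [interior_Ico]
      intro z hz
      simp only [Set.mem_Ioo] at hz
      rw [(mid_hasDeriv z hz.1 hz.2).deriv]
      have l1 : Real.log (1+z) + Real.log (1-z) = Real.log ((1+z)*(1-z)) :=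
        (Real.log_mul (by linarith [hz.1]) (by linarith [hz.2])).symm
      have l2 : Real.log ((1+z)*(1-z)) ≤ 0 :=
        Real.log_nonpos (by nlinarith [hz.1, hz.2]) (by nlinarith [hz.1, hz.2])
      linarith
  have h00 : (0:ℝ) ∈ Set.Ico (0:ℝ) 1 := by constructor <;> norm_num
  have hu : u ∈ Set.Ico (0:ℝ) 1 := ⟨h0, h1⟩
  have := key h00 hu h0
  norm_num [Real.log_one] at this
  linarith [this]

/-- midpoint inequality: for m ≥ 1, F(m+1/2) - F(m-1/2) ≤ log m with F y = y log y - y. -/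
lemma midpoint_ineq {m : ℝ} (hm : 1 ≤ m) :
    (m+1/2) * Real.log (m+1/2) - (m-1/2) * Real.log (m-1/2) - 1 ≤ Real.log m := by
  have hm0 : 0 < m := by linarith
  set u : ℝ := 1/(2*m) with hu_def
  have hu0 : 0 < u := by positivity
  have hu1 : u < 1 := by
    rw [hu_def, div_lt_one (by linarith)]
    linarith
  have e1 : m + 1/2 = m * (1+u) := by
    rw [hu_def]; field_simp
  have e2 : m - 1/2 = m * (1-u) := by
    rw [hu_def]; field_simp
  have hp1 : (0:ℝ) < 1 + u := by linarith
  have hp2 : (0:ℝ) < 1 - u := by linarith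
  have l1 : Real.log (m+1/2) = Real.log m + Real.log (1+u) := by
    rw [e1, Real.log_mul (ne_of_gt hm0) (ne_of_gt hp1)]
  have l2 : Real.log (m-1/2) = Real.log m + Real.log (1-u) := by
    rw [e2, Real.log_mul (ne_of_gt hm0) (ne_of_gt hp2)]
  have hcore := mid_core hu0.le hu1
  -- (m+1/2) log(1+u) - (m-1/2) log(1-u) ≤ 1
  have key : (m+1/2) * Real.log (1+u) - (m-1/2) * Real.log (1-u) ≤ 1 := by
    have h2u : 0 < 2*u := by linarith
    rw [← mul_le_mul_iff_right₀ h2u]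
    have expand : 2*u*((m+1/2) * Real.log (1+u) - (m-1/2) * Real.log (1-u))
        = (2*u*(m+1/2)) * Real.log (1+u) - (2*u*(m-1/2)) * Real.log (1-u) := by ring
    have f1 : 2*u*(m+1/2) = 1+u := by rw [hu_def]; field_simp
    have f2 : 2*u*(m-1/2) = 1-u := by rw [hu_def]; field_simp
    rw [expand, f1, f2]
    linarith [hcore]
  nlinarith [key, l1, l2]

/-- product lower bound by induction -/
lemma gamma_prod_lower {x : ℝ} (hx : 1 ≤ x) (n : ℕ) :
    Real.log (Real.Gamma x)
      + (((x+n-1/2) * Real.log (x+n-1/2) - (x+n-1/2)) - ((x-1/2) * Real.log (x-1/2) - (x-1/2)))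
      ≤ Real.log (Real.Gamma (x+n)) := by
  induction n with
  | zero => simp
  | succ n ih =>
    have hn0 : (0:ℝ) ≤ n := Nat.cast_nonneg n
    have hxn : (1:ℝ) ≤ x + n := by linarith
    have hxn0 : (0:ℝ) < x + n := by linarith
    have hG : Real.Gamma (x + (n+1 : ℕ)) = (x+n) * Real.Gamma (x+n) := by
      push_cast
      rw [show x + ((n:ℝ) + 1) = (x + n) + 1 by ring]
      exact Real.Gamma_add_one (ne_of_gt hxn0)
    have hGpos : 0 < Real.Gamma (x+n) := Real.Gamma_pos_of_pos hxn0
    have hlog : Real.log (Real.Gamma (x + (n+1:ℕ)))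
        = Real.log (x+n) + Real.log (Real.Gamma (x+n)) := by
      rw [hG, Real.log_mul (ne_of_gt hxn0) (ne_of_gt hGpos)]
    have hmid := midpoint_ineq hxn
    have e1 : x + ((n+1:ℕ):ℝ) - 1/2 = (x+n) + 1/2 := by push_cast; ring
    have e2 : x + (n:ℝ) - 1/2 = (x+n) - 1/2 := by ring
    rw [hlog, e1]
    rw [e2] at ih
    linarith [ih, hmid]

/-- Gautschi-type bound from log-convexity -/
lemma gautschi {t r : ℝ} (ht : 1 ≤ t) (hr0 : 0 ≤ r) (hr1 : r < 1) :
    Real.log t + Real.log (Real.Gamma t) + (r-1) * Real.log (t+r)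
      ≤ Real.log (Real.Gamma (t+r)) := by
  have ht0 : (0:ℝ) < t := by linarith
  rcases eq_or_lt_of_le hr0 with h | h
  · subst h
    norm_num
  · have hx0 : (0:ℝ) < t + r := by linarith
    have key := Real.Gamma_mul_add_mul_le_rpow_Gamma_mul_rpow_Gamma
      (show (0:ℝ) < t+r from hx0) (show (0:ℝ) < t+r+1 by linarith)
      h (show (0:ℝ) < 1-r by linarith) (by ring)
    rw [show r * (t+r) + (1-r) * (t+r+1) = t+1 by ring] at key
    rw [Real.Gamma_add_one (ne_of_gt ht0)] at key
    rw [show t + r + 1 = (t+r) + 1 by ring, Real.Gamma_add_one (ne_of_gt hx0)] at key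
    have hGx : 0 < Real.Gamma (t+r) := Real.Gamma_pos_of_pos hx0
    have hGt : 0 < Real.Gamma t := Real.Gamma_pos_of_pos ht0
    have hlhs : 0 < t * Real.Gamma t := by positivity
    have := Real.log_le_log hlhs key
    rw [Real.log_mul (ne_of_gt ht0) (ne_of_gt hGt),
      Real.log_mul (by positivity) (by positivity),
      Real.log_rpow hGx, Real.log_rpow (by positivity),
      Real.log_mul (ne_of_gt hx0) (ne_of_gt hGx)] at this
    nlinarith [this]

/-- arithmetic tail bound -/
lemma tail_bound {t r : ℝ} (ht : 1 ≤ t) (hr0 : 0 ≤ r) (hr1 : r ≤ 1) :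
    r/(2*t) + 1/(4*(t+r)) ≤ Real.log 2 := by
  have hl2 : (0.6931471803 : ℝ) < Real.log 2 := Real.log_two_gt_d9
  have h1 : r/(2*t) ≤ r/2 := by
    rw [div_le_div_iff₀ (by linarith) (by norm_num)]
    nlinarith [mul_nonneg hr0 (by linarith : (0:ℝ) ≤ t - 1)]
  have h4 : (0:ℝ) < 4*(1+r) := by linarith
  have hinv : 1/(4*(1+r)) ≤ (1 - r/2)/4 := by
    rw [div_le_div_iff₀ h4 (by norm_num)]
    nlinarith [mul_nonneg hr0 (sub_nonneg.mpr hr1)]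
  have h2 : 1/(4*(t+r)) ≤ 1/(4*(1+r)) := by
    rw [div_le_div_iff₀ (by linarith) h4]
    nlinarith
  linarith

/-- For every real `t ≥ 1` and `s ≥ 0`,
`Γ(t)/Γ(t+s) ≤ 2·√(1 + s/t)·(t/(t+s))^t·e^s·(t+s)^{−s}`,
where `Γ` is the Euler Gamma function and powers with real exponents are `exp(b·log a)`. -/
theorem Gamma_ratio_upper_bound
    (t s : ℝ) (ht : 1 ≤ t) (hs : 0 ≤ s) :
    Real.Gamma t / Real.Gamma (t + s)
      ≤ 2 * Real.sqrt (1 + s / t) * (t / (t + s)) ^ t * Real.exp s * (t + s) ^ (-s) := by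
  have ht0 : (0:ℝ) < t := by linarith
  have hA0 : (0:ℝ) < t + s := by linarith
  have hr0 : (0:ℝ) ≤ s - ⌊s⌋₊ := sub_nonneg.mpr (Nat.floor_le hs)
  have hr1 : s - ⌊s⌋₊ < 1 := by
    have := Nat.lt_floor_add_one s
    linarith
  set r : ℝ := s - ⌊s⌋₊ with hrdef
  clear_value r
  have hxn : t + r + (⌊s⌋₊ : ℝ) = t + s := by rw [hrdef]; ring
  have hx1 : (1:ℝ) ≤ t + r := by linarith
  have hx0 : (0:ℝ) < t + r := by linarith
  have hga := gautschi ht hr0 hr1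
  have hprod := gamma_prod_lower hx1 ⌊s⌋₊
  rw [hxn] at hprod
  -- positivity facts
  have hΓA : 0 < Real.Gamma (t+s) := Real.Gamma_pos_of_pos hA0
  have hΓt : 0 < Real.Gamma t := Real.Gamma_pos_of_pos ht0
  have hst : (0:ℝ) < 1 + s/t := by positivity
  have hsqrt : 0 < Real.sqrt (1 + s/t) := Real.sqrt_pos.mpr hst
  have hpow1 : (0:ℝ) < (t/(t+s)) ^ t := Real.rpow_pos_of_pos (by positivity) t
  have hpow2 : (0:ℝ) < (t+s) ^ (-s) := Real.rpow_pos_of_pos hA0 (-s)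
  have hRHS : (0:ℝ) < 2 * Real.sqrt (1 + s / t) * (t / (t + s)) ^ t * Real.exp s * (t + s) ^ (-s) := by
    positivity
  rw [div_le_iff₀ hΓA, ← Real.exp_log hΓt, ← Real.exp_log (mul_pos hRHS hΓA)]
  apply Real.exp_le_exp.mpr
  -- expand the log of RHS
  have hexp : Real.log (2 * Real.sqrt (1 + s / t) * (t / (t + s)) ^ t * Real.exp s
        * (t + s) ^ (-s) * Real.Gamma (t+s))
      = Real.log 2 + (Real.log (t+s) - Real.log t)/2 + t * (Real.log t - Real.log (t+s))
        + s + (-s) * Real.log (t+s) + Real.log (Real.Gamma (t+s)) := by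
    rw [Real.log_mul (by positivity) (ne_of_gt hΓA),
        Real.log_mul (by positivity) (ne_of_gt hpow2),
        Real.log_mul (by positivity) (ne_of_gt (Real.exp_pos s)),
        Real.log_mul (by positivity) (ne_of_gt hpow1),
        Real.log_mul (by norm_num) (ne_of_gt hsqrt),
        Real.log_sqrt hst.le, Real.log_exp,
        Real.log_rpow (by positivity), Real.log_rpow hA0,
        Real.log_div (ne_of_gt ht0) (ne_of_gt hA0),
        show 1 + s/t = (t+s)/t by field_simp,
        Real.log_div (ne_of_gt hA0) (ne_of_gt ht0)]
  rw [hexp]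
  -- key estimates
  have ha_pos : (0:ℝ) < t + s - 1/2 := by linarith
  have hc_pos : (0:ℝ) < t + r - 1/2 := by linarith
  have H2 : (t+s-1/2) * (Real.log (t+s) - Real.log (t+s-1/2)) ≤ 1/2 := by
    have hlog : Real.log (t+s) - Real.log (t+s-1/2) ≤ (1/2)/(t+s-1/2) := by
      rw [← Real.log_div (ne_of_gt hA0) (ne_of_gt ha_pos)]
      have := Real.log_le_sub_one_of_pos (show (0:ℝ) < (t+s)/(t+s-1/2) by positivity)
      have heq : (t+s)/(t+s-1/2) - 1 = (1/2)/(t+s-1/2) := by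
        rw [div_sub_one (ne_of_gt ha_pos)]; congr 1; ring
      linarith [this, heq.le]
    have := mul_le_mul_of_nonneg_left hlog ha_pos.le
    have heq2 : (t+s-1/2) * ((1/2)/(t+s-1/2)) = 1/2 := by
      rw [mul_comm, div_mul_cancel₀ _ (ne_of_gt ha_pos)]
    linarith [this, heq2.le]
  have H3 : (t+r-1/2) * (Real.log (t+r-1/2) - Real.log (t+r)) ≤ -(1/2 - 1/(4*(t+r))) := by
    have hlog : Real.log (t+r-1/2) - Real.log (t+r) ≤ -((1/2)/(t+r)) := by
      rw [← Real.log_div (ne_of_gt hc_pos) (ne_of_gt hx0)]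
      have := Real.log_le_sub_one_of_pos (show (0:ℝ) < (t+r-1/2)/(t+r) by positivity)
      have heq : (t+r-1/2)/(t+r) - 1 = -((1/2)/(t+r)) := by
        have h1 : t+r ≠ 0 := ne_of_gt hx0
        field_simp
        ring
      linarith [this, heq.le]
    have := mul_le_mul_of_nonneg_left hlog hc_pos.le
    have heq2 : (t+r-1/2) * (-((1/2)/(t+r))) = -(1/2 - 1/(4*(t+r))) := by
      have h1 : t+r ≠ 0 := ne_of_gt hx0
      field_simp
      ring
    linarith [this, heq2.le]
  have H4 : (t+1/2) * (Real.log (t+r) - Real.log t) ≤ r + r/(2*t) := by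
    have hlog : Real.log (t+r) - Real.log t ≤ r/t := by
      rw [← Real.log_div (ne_of_gt hx0) (ne_of_gt ht0)]
      have := Real.log_le_sub_one_of_pos (show (0:ℝ) < (t+r)/t by positivity)
      have heq : (t+r)/t - 1 = r/t := by
        have h1 : t ≠ 0 := ne_of_gt ht0
        field_simp
        ring
      linarith [this, heq.le]
    have := mul_le_mul_of_nonneg_left hlog (by linarith : (0:ℝ) ≤ t + 1/2)
    have heq2 : (t+1/2) * (r/t) = r + r/(2*t) := by
      have h1 : t ≠ 0 := ne_of_gt ht0
      field_simp
    linarith [this, heq2.le]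
  have H5 := tail_bound ht hr0 hr1.le
  linarith [hga, hprod, H2, H3, H4, H5]
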